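/- arXiv:1005.2590 — 6 statements merged into one kernel-verified Lean document; each statement's English description precedes it below -/
import Mathlib

section
/- If D is an ultrafilter on a set I and f : I → I satisfies Ultrafilter.map f D = D, then the set {i ∈ I : f(i) = i} belongs to D. -/
open Function

namespace RKFix

open Fin.NatCast

variable {I : Type*}

attribute [local instance 10] Classical.propDecidable

/-- pick an element from a nonempty set -/
noncomputable def sm (s : Set I) (h : s.Nonempty) : I := h.some

lemma sm_mem (s : Set I) (h : s.Nonempty) : sm s h ∈ s := h.some_mem

lemma sm_congr {s t : Set I} (h1 : s.Nonempty) (h2 : t.Nonempty) (e : s = t) :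
    sm s h1 = sm t h2 := by subst e; rfl

/-- forward orbit of a point -/
def orbitS (f : I → I) (x : I) : Set I := Set.range fun k => f^[k] x

lemma orbitS_nonempty (f : I → I) (x : I) : (orbitS f x).Nonempty := ⟨x, 0, rfl⟩

lemma orbitS_apply (f : I → I) (x : I) (hx : x ∈ periodicPts f) :
    orbitS f (f x) = orbitS f x := by
  obtain ⟨m, hm, hmp⟩ := mem_periodicPts.mp hx
  ext j
  constructor
  · rintro ⟨k, rfl⟩
    exact ⟨k + 1, (iterate_succ_apply f k x).symm⟩
  · rintro ⟨k, rfl⟩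
    refine ⟨k + m - 1, ?_⟩
    show f^[k + m - 1] (f x) = f^[k] x
    rw [← iterate_succ_apply, Nat.succ_eq_add_one,
      show k + m - 1 + 1 = k + m from by omega, iterate_add_apply, hmp.eq]

/-- cyclic type: the orbit eventually reaches a periodic point -/
def Cyc (f : I → I) (i : I) : Prop := ∃ k, f^[k] i ∈ periodicPts f

lemma cyc_apply_iff (f : I → I) (i : I) : Cyc f (f i) ↔ Cyc f i := by
  constructor
  · rintro ⟨k, hk⟩
    exact ⟨k + 1, by rwa [iterate_succ_apply]⟩
  · rintro ⟨k, hk⟩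
    obtain ⟨m, hm, hmp⟩ := mem_periodicPts.mp hk
    refine ⟨k, ?_⟩
    rw [← iterate_succ_apply, iterate_succ_apply']
    exact mk_mem_periodicPts hm hmp.apply

noncomputable def entry (f : I → I) (i : I) (hc : Cyc f i) : I := f^[Nat.find hc] i

lemma entry_periodic (f : I → I) (i : I) (hc : Cyc f i) :
    entry f i hc ∈ periodicPts f := Nat.find_spec hc

noncomputable def basePt (f : I → I) (i : I) (hc : Cyc f i) : I :=
  sm (orbitS f (entry f i hc)) (orbitS_nonempty f _)

lemma basePt_periodic (f : I → I) (i : I) (hc : Cyc f i) :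
    basePt f i hc ∈ periodicPts f := by
  obtain ⟨k0, hk0⟩ := sm_mem (orbitS f (entry f i hc)) (orbitS_nonempty f _)
  obtain ⟨m, hm, hmp⟩ := mem_periodicPts.mp (entry_periodic f i hc)
  rw [show sm (orbitS f (entry f i hc)) (orbitS_nonempty f _) = basePt f i hc from rfl] at hk0
  rw [← hk0]
  exact mk_mem_periodicPts hm (hmp.apply_iterate k0)

lemma exists_iter_base (f : I → I) (i : I) (hc : Cyc f i) :
    ∃ k, f^[k] (basePt f i hc) = entry f i hc := by
  obtain ⟨k0, hk0⟩ := sm_mem (orbitS f (entry f i hc)) (orbitS_nonempty f _)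
  obtain ⟨m, hm, hmp⟩ := mem_periodicPts.mp (entry_periodic f i hc)
  rw [show sm (orbitS f (entry f i hc)) (orbitS_nonempty f _) = basePt f i hc from rfl] at hk0
  refine ⟨m * (k0 + 1) - k0, ?_⟩
  rw [← hk0, ← iterate_add_apply]
  have h1 : m * (k0 + 1) - k0 + k0 = m * (k0 + 1) := by
    have : k0 + 1 ≤ m * (k0 + 1) := Nat.le_mul_of_pos_left _ hm
    omega
  rw [h1]
  exact (hmp.mul_const (k0 + 1)).eq

/-- color of a point on the cycle, by position from the base point -/
noncomputable def baseCol (f : I → I) (b x : I) (h : ∃ k, f^[k] b = x) : Fin 3 :=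
  if Nat.find h = minimalPeriod f b - 1 then 2 else ((Nat.find h % 2 : ℕ) : Fin 3)

lemma baseCol_congr (f : I → I) {b b' x x' : I} (h : ∃ k, f^[k] b = x)
    (h' : ∃ k, f^[k] b' = x') (hb : b = b') (hx : x = x') :
    baseCol f b x h = baseCol f b' x' h' := by subst hb; subst hx; rfl

noncomputable def tailAdj (d : ℕ) (cc : Fin 3) : Fin 3 :=
  if d = 0 then cc else cc + 1 + ((d % 2 : ℕ) : Fin 3)

noncomputable def cycCol (f : I → I) (i : I) (hc : Cyc f i) : Fin 3 :=
  tailAdj (Nat.find hc)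
    (baseCol f (basePt f i hc) (entry f i hc) (exists_iter_base f i hc))

lemma pos_lt (f : I → I) {b x : I} (h : ∃ k, f^[k] b = x) (hb : b ∈ periodicPts f) :
    Nat.find h < minimalPeriod f b := by
  have hp : 0 < minimalPeriod f b := minimalPeriod_pos_of_mem_periodicPts hb
  have hmod : f^[Nat.find h % minimalPeriod f b] b = x := by
    rw [(isPeriodicPt_minimalPeriod f b).iterate_mod_apply]
    exact Nat.find_spec h
  have h1 : Nat.find h ≤ Nat.find h % minimalPeriod f b := Nat.find_min' h hmod
  have h2 : Nat.find h % minimalPeriod f b < minimalPeriod f b := Nat.mod_lt _ hp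
  omega

lemma pos_unique (f : I → I) {b x : I} (h : ∃ k, f^[k] b = x) (hb : b ∈ periodicPts f)
    {k : ℕ} (hk : k < minimalPeriod f b) (hkx : f^[k] b = x) : Nat.find h = k := by
  have h1 : Nat.find h < minimalPeriod f b := pos_lt f h hb
  have h2 : f^[Nat.find h] b = f^[k] b := by rw [Nat.find_spec h, hkx]
  exact (iterate_eq_iterate_iff_of_lt_minimalPeriod h1 hk).mp h2

/-- the numerical step lemma for cycle colors -/
lemma baseCol_step {p q q' : ℕ} (hq : q < p) (hq' : q' < p) (hstep : q' = (q + 1) % p)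
    (hne : q ≠ q') :
    (if q' = p - 1 then (2 : Fin 3) else ((q' % 2 : ℕ) : Fin 3)) ≠
      (if q = p - 1 then (2 : Fin 3) else ((q % 2 : ℕ) : Fin 3)) := by
  have hp2 : 2 ≤ p := by
    rcases Nat.lt_or_ge p 2 with h | h
    · interval_cases p <;> omega
    · exact h
  by_cases h1 : q = p - 1
  · have hq1 : q + 1 = p := by omega
    have hq'0 : q' = 0 := by rw [hstep, hq1, Nat.mod_self]
    have h2 : q' ≠ p - 1 := by omega
    rw [if_pos h1, if_neg h2, hq'0]
    decide
  · have hlt : q + 1 < p := by omega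
    have hq'1 : q' = q + 1 := by rw [hstep, Nat.mod_eq_of_lt hlt]
    by_cases h2 : q' = p - 1
    · rw [if_pos h2, if_neg h1]
      have : q % 2 = 0 ∨ q % 2 = 1 := by omega
      rcases this with h3 | h3 <;> rw [h3] <;> decide
    · rw [if_neg h2, if_neg h1, hq'1]
      have : q % 2 = 0 ∧ (q + 1) % 2 = 1 ∨ q % 2 = 1 ∧ (q + 1) % 2 = 0 := by omega
      rcases this with ⟨h3, h4⟩ | ⟨h3, h4⟩ <;> rw [h3, h4] <;> decide

lemma fin3_one : ∀ x : Fin 3, x ≠ x + 1 + ((1 % 2 : ℕ) : Fin 3) := by decide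

lemma fin3_two : ∀ x : Fin 3, x + 1 + ((0 : ℕ) : Fin 3) ≠ x + 1 + ((1 : ℕ) : Fin 3) := by
  decide

lemma fin3_three : ∀ x : Fin 3, x + 1 + ((1 : ℕ) : Fin 3) ≠ x + 1 + ((0 : ℕ) : Fin 3) := by
  decide

lemma cyc_ne (f : I → I) (i : I) (hfi : f i ≠ i) (hc : Cyc f i) (hc' : Cyc f (f i)) :
    cycCol f (f i) hc' ≠ cycCol f i hc := by
  by_cases hd : Nat.find hc = 0
  · -- i itself is periodic
    have hiper : i ∈ periodicPts f := by
      have := Nat.find_spec hc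
      rwa [hd] at this
    have hfiper : f i ∈ periodicPts f := by
      obtain ⟨m, hm, hmp⟩ := mem_periodicPts.mp hiper
      exact mk_mem_periodicPts hm hmp.apply
    have hd' : Nat.find hc' = 0 := by
      exact (Nat.find_eq_zero hc').mpr hfiper
    have he : entry f i hc = i := by
      unfold entry; rw [hd]; rfl
    have he' : entry f (f i) hc' = f i := by
      unfold entry; rw [hd']; rfl
    -- base points agree
    have horb : orbitS f (entry f (f i) hc') = orbitS f (entry f i hc) := by
      rw [he, he', orbitS_apply f i hiper]
    have hb : basePt f (f i) hc' = basePt f i hc :=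
      sm_congr _ _ horb
    set b := basePt f i hc with hbdef
    have hbper : b ∈ periodicPts f := basePt_periodic f i hc
    set p := minimalPeriod f b with hpdef
    -- the two existence proofs, rewritten to common base point and entries i, f i
    have hEi : ∃ k, f^[k] b = i := by
      have := exists_iter_base f i hc; rwa [he] at this
    have hEfi : ∃ k, f^[k] b = f i := by
      have := exists_iter_base f (f i) hc'; rwa [he', hb] at this
    have hL : cycCol f i hc = baseCol f b i hEi := by
      unfold cycCol
      rw [hd]
      show tailAdj 0 _ = _
      unfold tailAdj
      rw [if_pos rfl]
      exact baseCol_congr f _ _ rfl he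
    have hR : cycCol f (f i) hc' = baseCol f b (f i) hEfi := by
      unfold cycCol
      rw [hd']
      show tailAdj 0 _ = _
      unfold tailAdj
      rw [if_pos rfl]
      exact baseCol_congr f _ _ hb he'
    rw [hL, hR]
    set q := Nat.find hEi with hqdef
    set q' := Nat.find hEfi with hq'def
    have hq : q < p := pos_lt f hEi hbper
    have hq' : q' < p := pos_lt f hEfi hbper
    have hstep : q' = (q + 1) % p := by
      have hw : f^[(q + 1) % p] b = f i := by
        rw [(isPeriodicPt_minimalPeriod f b).iterate_mod_apply, iterate_succ_apply',
          Nat.find_spec hEi]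
      have hwlt : (q + 1) % p < p :=
        Nat.mod_lt _ (minimalPeriod_pos_of_mem_periodicPts hbper)
      exact pos_unique f hEfi hbper hwlt hw
    have hne : q ≠ q' := by
      intro hqq
      apply hfi
      have h1 : f^[q] b = i := Nat.find_spec hEi
      have h2 : f^[q'] b = f i := Nat.find_spec hEfi
      rw [← hqq, h1] at h2
      exact h2.symm
    unfold baseCol
    rw [← hqdef, ← hq'def]
    exact baseCol_step hq hq' hstep hne
  · -- tail case : d ≥ 1
    have hd1 : 1 ≤ Nat.find hc := by omega
    set d := Nat.find hc with hddef
    have hd' : Nat.find hc' = d - 1 := by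
      refine (Nat.find_eq_iff hc').mpr ?_
      constructor
      · rw [← iterate_succ_apply, Nat.succ_eq_add_one,
          show d - 1 + 1 = d from by omega]
        exact Nat.find_spec hc
      · intro k hk
        rw [← iterate_succ_apply, Nat.succ_eq_add_one]
        exact Nat.find_min hc (by omega)
    have he' : entry f (f i) hc' = entry f i hc := by
      unfold entry
      rw [hd', ← hddef, ← iterate_succ_apply]
      congr 1
      omega
    have hb : basePt f (f i) hc' = basePt f i hc :=
      sm_congr _ _ (by rw [he'])
    have hbc : baseCol f (basePt f (f i) hc') (entry f (f i) hc') (exists_iter_base f (f i) hc')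
        = baseCol f (basePt f i hc) (entry f i hc) (exists_iter_base f i hc) :=
      baseCol_congr f _ _ hb he'
    unfold cycCol
    rw [hbc, hd', ← hddef]
    set cc := baseCol f (basePt f i hc) (entry f i hc) (exists_iter_base f i hc) with hccdef
    unfold tailAdj
    by_cases hD : d = 1
    · rw [hD]
      rw [if_pos (show 1 - 1 = 0 from rfl), if_neg one_ne_zero]
      exact fin3_one cc
    · rw [if_neg (show ¬(d - 1 = 0) from by omega), if_neg (show ¬(d = 0) from by omega)]
      rcases (show (d - 1) % 2 = 0 ∧ d % 2 = 1 ∨ (d - 1) % 2 = 1 ∧ d % 2 = 0 from by omega)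
        with ⟨h3, h4⟩ | ⟨h3, h4⟩ <;> rw [h3, h4]
      · exact fin3_two cc
      · exact fin3_three cc

/-- the class of points with intertwined orbits -/
def Kset (f : I → I) (i : I) : Set I := {j | ∃ m n, f^[m] i = f^[n] j}

lemma Kset_nonempty (f : I → I) (i : I) : (Kset f i).Nonempty := ⟨i, 0, 0, rfl⟩

lemma Kset_apply (f : I → I) (i : I) : Kset f (f i) = Kset f i := by
  ext j
  constructor
  · rintro ⟨m, n, hmn⟩
    exact ⟨m + 1, n, by rwa [iterate_succ_apply]⟩
  · rintro ⟨m, n, hmn⟩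
    refine ⟨m, n + 1, ?_⟩
    show f^[m] (f i) = f^[n + 1] j
    calc f^[m] (f i) = f^[m + 1] i := (iterate_succ_apply f m i).symm
      _ = f (f^[m] i) := iterate_succ_apply' f m i
      _ = f (f^[n] j) := by rw [hmn]
      _ = f^[n + 1] j := (iterate_succ_apply' f n j).symm

lemma Kset_spec (f : I → I) (i : I) :
    ∃ m n, f^[m] i = f^[n] (sm (Kset f i) (Kset_nonempty f i)) :=
  sm_mem (Kset f i) (Kset_nonempty f i)

/-- color in the acyclic case: parity of the level relative to the class representative -/
noncomputable def freeCol (f : I → I) (i : I) : Fin 3 :=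
  (((Kset_spec f i).choose + (Kset_spec f i).choose_spec.choose) % 2 : ℕ)

lemma iterate_inj (f : I → I) (i : I) (hc : ¬Cyc f i) {a b : ℕ}
    (hab : f^[a] i = f^[b] i) : a = b := by
  by_contra hne
  apply hc
  rcases Nat.lt_or_ge a b with h | h
  · exact ⟨a, mk_mem_periodicPts (by omega : 0 < b - a)
      (by show f^[b - a] (f^[a] i) = f^[a] i; rw [← iterate_add_apply]
          rw [show b - a + a = b by omega]; exact hab.symm)⟩
  · have h' : b < a := by omega
    exact ⟨b, mk_mem_periodicPts (by omega : 0 < a - b)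
      (by show f^[a - b] (f^[b] i) = f^[b] i; rw [← iterate_add_apply]
          rw [show a - b + b = a by omega]; exact hab)⟩

lemma parity_key (f : I → I) (i : I) (hc : ¬Cyc f i) (r : I) {m n m' n' : ℕ}
    (h1 : f^[m] i = f^[n] r) (h2 : f^[m'] (f i) = f^[n'] r) :
    (m' + n') % 2 ≠ (m + n) % 2 := by
  have h2' : f^[m' + 1] i = f^[n'] r := by rwa [iterate_succ_apply]
  have key : n' + m = n + (m' + 1) := by
    apply iterate_inj f i hc
    rw [iterate_add_apply, h1, iterate_add_apply, h2', ← iterate_add_apply,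
      ← iterate_add_apply, Nat.add_comm n' n]
  omega

lemma free_ne (f : I → I) (i : I) (hc : ¬Cyc f i) : freeCol f (f i) ≠ freeCol f i := by
  have hr : sm (Kset f (f i)) (Kset_nonempty f (f i)) = sm (Kset f i) (Kset_nonempty f i) :=
    sm_congr _ _ (Kset_apply f i)
  have hm : f^[(Kset_spec f i).choose] i =
      f^[(Kset_spec f i).choose_spec.choose] (sm (Kset f i) (Kset_nonempty f i)) :=
    (Kset_spec f i).choose_spec.choose_spec
  have hm' : f^[(Kset_spec f (f i)).choose] (f i) =
      f^[(Kset_spec f (f i)).choose_spec.choose] (sm (Kset f i) (Kset_nonempty f i)) :=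
    ((Kset_spec f (f i)).choose_spec.choose_spec).trans
      (congrArg (f^[(Kset_spec f (f i)).choose_spec.choose]) hr)
  have key := parity_key f i hc _ hm hm'
  unfold freeCol
  rcases (show ((Kset_spec f (f i)).choose + (Kset_spec f (f i)).choose_spec.choose) % 2 = 0 ∧
      ((Kset_spec f i).choose + (Kset_spec f i).choose_spec.choose) % 2 = 1 ∨
      ((Kset_spec f (f i)).choose + (Kset_spec f (f i)).choose_spec.choose) % 2 = 1 ∧
      ((Kset_spec f i).choose + (Kset_spec f i).choose_spec.choose) % 2 = 0 from by omega)
    with ⟨h3, h4⟩ | ⟨h3, h4⟩ <;> rw [h3, h4] <;> decide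

/-- the 3-coloring -/
noncomputable def col (f : I → I) (i : I) : Fin 3 :=
  if hc : Cyc f i then cycCol f i hc else freeCol f i

lemma col_ne (f : I → I) (i : I) (hfi : f i ≠ i) : col f (f i) ≠ col f i := by
  by_cases hc : Cyc f i
  · have hc' : Cyc f (f i) := (cyc_apply_iff f i).mpr hc
    rw [col, col, dif_pos hc, dif_pos hc']
    exact cyc_ne f i hfi hc hc'
  · have hc' : ¬Cyc f (f i) := fun h => hc ((cyc_apply_iff f i).mp h)
    rw [col, col, dif_neg hc, dif_neg hc']
    exact free_ne f i hc

end RKFix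

theorem fixed_points_mem_of_map_eq_self {I : Type*} (D : Ultrafilter I) (f : I → I)
    (h : Ultrafilter.map f D = D) : {i : I | f i = i} ∈ D := by
  by_contra hS
  have hS' : {i : I | f i ≠ i} ∈ D := by
    exact (Ultrafilter.compl_mem_iff_notMem).2 hS
  have hex : ∃ c : Fin 3, {i : I | RKFix.col f i = c} ∈ D := by
    by_contra hno
    push_neg at hno
    have h0 := (Ultrafilter.compl_mem_iff_notMem).2 (hno 0)
    have h1 := (Ultrafilter.compl_mem_iff_notMem).2 (hno 1)
    have h2 := (Ultrafilter.compl_mem_iff_notMem).2 (hno 2)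
    have hall : {i : I | RKFix.col f i = 0}ᶜ ∩ ({i : I | RKFix.col f i = 1}ᶜ ∩
        {i : I | RKFix.col f i = 2}ᶜ) ∈ D :=
      Filter.inter_mem h0 (Filter.inter_mem h1 h2)
    obtain ⟨i, hi0, hi1, hi2⟩ := Ultrafilter.nonempty_of_mem hall
    have : ∀ c : Fin 3, c = 0 ∨ c = 1 ∨ c = 2 := by decide
    rcases this (RKFix.col f i) with hh | hh | hh
    · exact hi0 hh
    · exact hi1 hh
    · exact hi2 hh
  obtain ⟨c, hc⟩ := hex
  have hmap : {i : I | RKFix.col f i = c} ∈ Ultrafilter.map f D := by rw [h]; exact hc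
  have hpre : f ⁻¹' {i : I | RKFix.col f i = c} ∈ D := Ultrafilter.mem_map.mp hmap
  have hall : {i : I | RKFix.col f i = c} ∩ (f ⁻¹' {i : I | RKFix.col f i = c} ∩
      {i : I | f i ≠ i}) ∈ D :=
    Filter.inter_mem hc (Filter.inter_mem hpre hS')
  obtain ⟨i, hi0, hi1, hi2⟩ := Ultrafilter.nonempty_of_mem hall
  have e1 : RKFix.col f i = c := hi0
  have e2 : RKFix.col f (f i) = c := hi1
  exact RKFix.col_ne f i hi2 (e2.trans e1.symm)
end

section
/- If D ≤_RK E and E ≤_RK D, then D and E are isomorphic ultrafilters; that is, there exist sets A ∈ D and B ∈ E and a bijection g : A → B such that for every Y ⊆ B, Y ∈ E iff g⁻¹(Y) ∈ D. -/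
open Function
open Fin.NatCast

namespace RKAux

attribute [local instance] Classical.propDecidable

variable {α : Type*}

lemma some_congr {s t : Set α} (h : s = t) (h1 : s.Nonempty) (h2 : t.Nonempty) :
    h1.some = h2.some := by subst h; rfl

variable (k : α → α)

/-- periodic point -/
def Per (x : α) : Prop := ∃ p, 0 < p ∧ k^[p] x = x

/-- eventually periodic -/
def Cyc (x : α) : Prop := ∃ n, Per k (k^[n] x)

noncomputable def period (x : α) : ℕ := if h : Per k x then Nat.find h else 0

variable {k}

lemma period_spec {x : α} (h : Per k x) : 0 < period k x ∧ k^[period k x] x = x := by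
  rw [period, dif_pos h]; exact Nat.find_spec h

lemma period_min {x : α} (h : Per k x) {q : ℕ} (h0 : 0 < q) (hq : q < period k x) :
    k^[q] x ≠ x := by
  rw [period, dif_pos h] at hq
  exact fun he => Nat.find_min h hq ⟨h0, he⟩

lemma per_apply {x : α} (h : Per k x) : Per k (k x) := by
  obtain ⟨p, hp, he⟩ := h
  exact ⟨p, hp, by rw [← iterate_succ_apply, iterate_succ_apply', he]⟩

lemma period_apply {x : α} (h : Per k x) : period k (k x) = period k x := by
  have h' := per_apply h
  obtain ⟨hpos, hper⟩ := period_spec h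
  obtain ⟨hpos', hper'⟩ := period_spec h'
  apply le_antisymm
  · by_contra hlt
    push_neg at hlt
    exact period_min h' hpos hlt (by rw [← iterate_succ_apply, iterate_succ_apply', hper])
  · by_contra hlt
    push_neg at hlt
    refine period_min h hpos' hlt ?_
    have hx : k^[period k x - 1] (k x) = x := by
      rw [← iterate_succ_apply, Nat.succ_eq_add_one, Nat.sub_add_cancel hpos]
      exact hper
    calc k^[period k (k x)] x = k^[period k (k x)] (k^[period k x - 1] (k x)) := by rw [hx]
      _ = k^[period k x - 1] (k^[period k (k x)] (k x)) := by
            rw [← iterate_add_apply, ← iterate_add_apply, Nat.add_comm]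
      _ = k^[period k x - 1] (k x) := by rw [hper']
      _ = x := hx

variable (k)

def orb (x : α) : Set α := Set.range (fun n => k^[n] x)

lemma orb_nonempty (x : α) : (orb k x).Nonempty := ⟨x, 0, rfl⟩

noncomputable def base (x : α) : α := (orb_nonempty k x).some

variable {k}

lemma base_mem (x : α) : ∃ n, k^[n] x = base k x := (orb_nonempty k x).some_mem

lemma orb_apply_of_per {x : α} (h : Per k x) : orb k (k x) = orb k x := by
  obtain ⟨hpos, hper⟩ := period_spec h
  ext y
  constructor
  · rintro ⟨n, rfl⟩
    exact ⟨n + 1, by simp [iterate_add_apply]⟩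
  · rintro ⟨n, rfl⟩
    refine ⟨n + (period k x - 1), ?_⟩
    show k^[n + (period k x - 1)] (k x) = k^[n] x
    rw [← iterate_succ_apply]
    have he : (n + (period k x - 1)).succ = n + period k x := by omega
    rw [he, iterate_add_apply, hper]

lemma base_apply_of_per {x : α} (h : Per k x) : base k (k x) = base k x :=
  some_congr (orb_apply_of_per h) _ _

variable (k)

noncomputable def pos (x : α) : ℕ := Nat.find (base_mem (k := k) x)

variable {k}

lemma pos_spec (x : α) : k^[pos k x] x = base k x := Nat.find_spec (base_mem x)

lemma pos_min {x : α} {m : ℕ} (hm : m < pos k x) : k^[m] x ≠ base k x :=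
  Nat.find_min (base_mem x) hm

lemma pos_lt_period {x : α} (h : Per k x) : pos k x < period k x := by
  obtain ⟨hpos, hper⟩ := period_spec h
  by_contra hle
  push_neg at hle
  have h1 : k^[pos k x - period k x] x = base k x := by
    have h2 : k^[pos k x - period k x] (k^[period k x] x) = base k x := by
      rw [← iterate_add_apply, Nat.sub_add_cancel hle]; exact pos_spec x
    rwa [hper] at h2
  exact pos_min (by omega) h1

lemma pos_apply_pos {x : α} (h : Per k x) (hx : 0 < pos k x) :
    pos k (k x) = pos k x - 1 := by
  have hb := base_apply_of_per h
  apply le_antisymm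
  · apply Nat.find_le
    rw [hb, ← iterate_succ_apply, Nat.succ_eq_add_one, Nat.sub_add_cancel hx]
    exact pos_spec x
  · by_contra hlt
    push_neg at hlt
    have h1 : k^[pos k (k x) + 1] x = base k x := by
      rw [iterate_succ_apply, ← hb]
      exact pos_spec (k x)
    exact pos_min (by omega) h1

lemma pos_apply_zero {x : α} (h : Per k x) (hx : pos k x = 0) :
    pos k (k x) = period k x - 1 := by
  obtain ⟨hpos, hper⟩ := period_spec h
  have hb : base k x = x := by
    have h' := pos_spec (k := k) x
    rw [hx, iterate_zero_apply] at h'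
    exact h'.symm
  have hb' := base_apply_of_per h
  apply le_antisymm
  · apply Nat.find_le
    rw [hb', hb, ← iterate_succ_apply, Nat.succ_eq_add_one, Nat.sub_add_cancel hpos]
    exact hper
  · by_contra hlt
    push_neg at hlt
    have h1 : k^[pos k (k x) + 1] x = x := by
      rw [iterate_succ_apply]
      have h2 := pos_spec (k := k) (k x)
      rwa [hb', hb] at h2
    exact period_min h (by omega) (by omega) h1

variable (k)

noncomputable def cycColor (x : α) : Fin 3 :=
  if pos k x + 1 = period k x ∧ period k x % 2 = 1 then 2 else ((pos k x % 2 : ℕ) : Fin 3)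

variable {k}

lemma period_two_le {x : α} (h : Per k x) (hne : k x ≠ x) : 2 ≤ period k x := by
  obtain ⟨hpos, hper⟩ := period_spec h
  by_contra hlt
  push_neg at hlt
  have h1 : period k x = 1 := by omega
  rw [h1, iterate_one] at hper
  exact hne hper

lemma natmod2_cast_ne {a b : ℕ} (h : a % 2 ≠ b % 2) :
    ((a % 2 : ℕ) : Fin 3) ≠ ((b % 2 : ℕ) : Fin 3) := by
  have h2 : a % 2 = 0 ∧ b % 2 = 1 ∨ a % 2 = 1 ∧ b % 2 = 0 := by omega
  rcases h2 with ⟨h1, h2⟩ | ⟨h1, h2⟩ <;> rw [h1, h2] <;> decide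

lemma two_ne_mod2 (a : ℕ) : (2 : Fin 3) ≠ ((a % 2 : ℕ) : Fin 3) := by
  rcases Nat.mod_two_eq_zero_or_one a with ha | ha <;> rw [ha] <;> decide

lemma cycColor_step {x : α} (h : Per k x) (hne : k x ≠ x) :
    cycColor k (k x) ≠ cycColor k x := by
  have h2 := period_two_le h hne
  have hpk := period_apply h
  have hlt := pos_lt_period h
  rcases Nat.eq_zero_or_pos (pos k x) with h0 | h0
  · have hq' := pos_apply_zero h h0
    rw [cycColor, cycColor, hpk, hq', h0]
    rcases Nat.mod_two_eq_zero_or_one (period k x) with hp | hp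
    · rw [if_neg (by omega), if_neg (by omega)]
      exact natmod2_cast_ne (by omega)
    · rw [if_pos (by omega), if_neg (by omega)]
      exact two_ne_mod2 0
  · have hq' := pos_apply_pos h h0
    rw [cycColor, cycColor, hpk, hq', if_neg (by omega)]
    by_cases hc : pos k x + 1 = period k x ∧ period k x % 2 = 1
    · rw [if_pos hc]
      exact (two_ne_mod2 (pos k x - 1)).symm
    · rw [if_neg hc]
      exact natmod2_cast_ne (by omega)

end RKAux
namespace RKAux

attribute [local instance] Classical.propDecidable

open Function

variable {α : Type*} (k : α → α)

noncomputable def distC (x : α) : ℕ := if h : Cyc k x then Nat.find h else 0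

variable {k}

lemma distC_spec {x : α} (h : Cyc k x) : Per k (k^[distC k x] x) := by
  rw [distC, dif_pos h]; exact Nat.find_spec h

lemma distC_min {x : α} (h : Cyc k x) {m : ℕ} (hm : m < distC k x) : ¬ Per k (k^[m] x) := by
  rw [distC, dif_pos h] at hm
  exact Nat.find_min h hm

lemma cyc_apply {x : α} (h : Cyc k x) : Cyc k (k x) := by
  obtain ⟨n, hn⟩ := h
  rcases Nat.eq_zero_or_pos n with h0 | h0
  · rw [h0, iterate_zero_apply] at hn
    exact ⟨0, by rw [iterate_zero_apply]; exact per_apply hn⟩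
  · refine ⟨n - 1, ?_⟩
    rwa [← iterate_succ_apply, Nat.succ_eq_add_one, Nat.sub_add_cancel h0]

lemma not_cyc_apply {x : α} (h : ¬ Cyc k x) : ¬ Cyc k (k x) := by
  rintro ⟨n, hn⟩
  exact h ⟨n + 1, by rwa [iterate_add_apply, iterate_one]⟩

lemma distC_pos {x : α} (h : Cyc k x) (hp : ¬ Per k x) : 0 < distC k x := by
  rcases Nat.eq_zero_or_pos (distC k x) with h0 | h0
  · have := distC_spec h
    rw [h0, iterate_zero_apply] at this
    exact absurd this hp
  · exact h0

lemma distC_apply {x : α} (h : Cyc k x) (hp : ¬ Per k x) :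
    distC k (k x) = distC k x - 1 := by
  have hd := distC_pos h hp
  have hc' := cyc_apply h
  apply le_antisymm
  · rw [distC, dif_pos hc']
    apply Nat.find_le
    rw [← iterate_succ_apply, Nat.succ_eq_add_one, Nat.sub_add_cancel hd]
    exact distC_spec h
  · by_contra hlt
    push_neg at hlt
    refine distC_min h (m := distC k (k x) + 1) (by omega) ?_
    rw [iterate_add_apply, iterate_one]
    exact distC_spec hc'

lemma anchor_apply {x : α} (h : Cyc k x) (hp : ¬ Per k x) :
    k^[distC k (k x)] (k x) = k^[distC k x] x := by
  rw [distC_apply h hp, ← iterate_succ_apply, Nat.succ_eq_add_one,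
    Nat.sub_add_cancel (distC_pos h hp)]

/-! ### non-cyclic points -/

variable (k)

def cls (x : α) : Set α := {y | ∃ m n, k^[m] x = k^[n] y}

lemma cls_nonempty (x : α) : (cls k x).Nonempty := ⟨x, 0, 0, rfl⟩

noncomputable def rep (x : α) : α := (cls_nonempty k x).some

variable {k}

lemma rep_mem (x : α) : ∃ m n, k^[m] x = k^[n] (rep k x) := (cls_nonempty k x).some_mem

lemma cls_apply (x : α) : cls k (k x) = cls k x := by
  ext y
  constructor
  · rintro ⟨m, n, he⟩
    exact ⟨m + 1, n, by rwa [iterate_add_apply, iterate_one]⟩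
  · rintro ⟨m, n, he⟩
    refine ⟨m, n + 1, ?_⟩
    show k^[m] (k x) = k^[n+1] y
    rw [← iterate_succ_apply, iterate_succ_apply', he]
    exact (iterate_succ_apply' k n y).symm

lemma rep_apply (x : α) : rep k (k x) = rep k x :=
  some_congr (cls_apply x) _ _

variable (k)

noncomputable def mm (x : α) : ℕ := Nat.find (rep_mem (k := k) x)

lemma mm_spec (x : α) : ∃ n, k^[mm k x] x = k^[n] (rep k x) := Nat.find_spec (rep_mem x)

noncomputable def nn (x : α) : ℕ := Nat.find (mm_spec k x)

variable {k}

lemma nn_spec (x : α) : k^[mm k x] x = k^[nn k x] (rep k x) := Nat.find_spec (mm_spec k x)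

lemma mm_min {x : α} {m : ℕ} (hm : m < mm k x) : ¬ ∃ n, k^[m] x = k^[n] (rep k x) :=
  Nat.find_min (rep_mem x) hm

lemma nn_min {x : α} {n : ℕ} (hn : n < nn k x) : k^[mm k x] x ≠ k^[n] (rep k x) :=
  Nat.find_min (mm_spec k x) hn

lemma mm_nn_apply {x : α} (h : ¬ Cyc k x) :
    (mm k (k x) + nn k (k x)) % 2 ≠ (mm k x + nn k x) % 2 := by
  have hr := rep_apply (k := k) x
  rcases Nat.eq_zero_or_pos (mm k x) with h0 | h0
  · -- mm x = 0 : x = k^[nn x] r; mm (k x) = 0, nn (k x) = nn x + 1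
    have hx : x = k^[nn k x] (rep k x) := by
      have := nn_spec (k := k) x
      rwa [h0, iterate_zero_apply] at this
    have hm' : mm k (k x) = 0 := by
      refine Nat.eq_zero_of_le_zero (Nat.find_le ?_)
      exact ⟨nn k x + 1, by rw [iterate_zero_apply, hr, iterate_succ_apply', ← hx]⟩
    have hkx : k^[mm k (k x)] (k x) = k^[nn k x + 1] (rep k (k x)) := by
      rw [hm', iterate_zero_apply, hr, iterate_succ_apply', ← hx]
    have hn' : nn k (k x) = nn k x + 1 := by
      apply le_antisymm
      · exact Nat.find_le hkx
      · by_contra hlt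
        push_neg at hlt
        -- k x = k^[nn (k x)] r with nn (k x) ≤ nn x, so k x is periodic
        have h1 := nn_spec (k := k) (k x)
        rw [hm', iterate_zero_apply, hr] at h1
        -- k x = k^[nn k (k x)] r and k x = k^[nn x + 1] r
        have h2 : k x = k^[nn k x + 1] (rep k x) := by
          rw [iterate_succ_apply', ← hx]
        have h3 : k^[nn k x + 1 - nn k (k x)] (k x) = k x := by
          calc k^[nn k x + 1 - nn k (k x)] (k x)
              = k^[nn k x + 1 - nn k (k x)] (k^[nn k (k x)] (rep k x)) := by rw [← h1]
            _ = k^[nn k x + 1 - nn k (k x) + nn k (k x)] (rep k x) :=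
                (iterate_add_apply k _ _ _).symm
            _ = k^[nn k x + 1] (rep k x) := by rw [Nat.sub_add_cancel (by omega)]
            _ = k x := h2.symm
        exact not_cyc_apply h ⟨0, by rw [iterate_zero_apply]; exact ⟨_, by omega, h3⟩⟩
    omega
  · -- mm x > 0 : mm (k x) = mm x - 1, nn (k x) = nn x
    have hm' : mm k (k x) = mm k x - 1 := by
      apply le_antisymm
      · refine Nat.find_le ⟨nn k x, ?_⟩
        rw [← iterate_succ_apply, Nat.succ_eq_add_one, Nat.sub_add_cancel h0, hr]
        exact nn_spec x
      · by_contra hlt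
        push_neg at hlt
        refine mm_min (k := k) (x := x) (m := mm k (k x) + 1) (by omega) ?_
        obtain ⟨n, hn⟩ := mm_spec k (k x)
        rw [hr] at hn
        exact ⟨n, by rwa [iterate_add_apply, iterate_one]⟩
    have hsame : k^[mm k (k x)] (k x) = k^[mm k x] x := by
      rw [hm', ← iterate_succ_apply, Nat.succ_eq_add_one, Nat.sub_add_cancel h0]
    have hn' : nn k (k x) = nn k x := by
      apply le_antisymm
      · refine Nat.find_le ?_
        rw [hsame, hr]; exact nn_spec x
      · by_contra hlt
        push_neg at hlt
        refine nn_min (x := x) hlt ?_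
        have h1 := nn_spec (k := k) (k x)
        rwa [hsame, hr] at h1
    omega

/-! ### the coloring -/

variable (k)

noncomputable def color (x : α) : Fin 3 :=
  if h : Cyc k x then
    (if Per k x then cycColor k x
     else cycColor k (k^[distC k x] x) + (if distC k x % 2 = 1 then 1 else 2))
  else ((mm k x + nn k x) % 2 : ℕ)

variable {k}

theorem color_step {x : α} (hne : k x ≠ x) : color k (k x) ≠ color k x := by
  by_cases hc : Cyc k x
  · have hc' := cyc_apply hc
    by_cases hp : Per k x
    · have hp' := per_apply hp
      rw [color, color, dif_pos hc, dif_pos hc', if_pos hp, if_pos hp']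
      exact cycColor_step hp hne
    · have hd := distC_pos hc hp
      have hda := distC_apply hc hp
      have han := anchor_apply hc hp
      rcases Nat.lt_or_ge (distC k x) 2 with h1 | h2
      · -- distC x = 1, so k x is periodic (the anchor)
        have hd1 : distC k x = 1 := by omega
        have hp' : Per k (k x) := by
          have := distC_spec hc
          rwa [hd1, iterate_one] at this
        rw [color, color, dif_pos hc, dif_pos hc', if_pos hp', if_neg hp, hd1]
        rw [if_pos (by norm_num), iterate_one]
        intro he
        exact (by decide : ∀ a : Fin 3, a ≠ a + 1) _ he
      · -- distC x ≥ 2, k x not periodic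
        have hp' : ¬ Per k (k x) := by
          intro hper
          have : distC k (k x) = 0 := by
            refine Nat.eq_zero_of_le_zero ?_
            rw [distC, dif_pos hc']
            exact Nat.find_le (by rw [iterate_zero_apply]; exact hper)
          omega
        rw [color, color, dif_pos hc, dif_pos hc', if_neg hp, if_neg hp', han, hda]
        intro he
        have he2 : (if (distC k x - 1) % 2 = 1 then (1:Fin 3) else 2)
            = (if distC k x % 2 = 1 then (1:Fin 3) else 2) := add_left_cancel he
        rcases Nat.mod_two_eq_zero_or_one (distC k x) with hm | hm
        · rw [if_pos (by omega : (distC k x - 1) % 2 = 1),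
            if_neg (by omega : ¬ distC k x % 2 = 1)] at he2
          exact absurd he2 (by decide)
        · rw [if_neg (by omega : ¬ (distC k x - 1) % 2 = 1), if_pos hm] at he2
          exact absurd he2 (by decide)
  · have hc' := not_cyc_apply hc
    rw [color, color, dif_neg hc, dif_neg hc']
    exact natmod2_cast_ne (by
      have := mm_nn_apply hc
      omega)

theorem exists_three_coloring (k : α → α) :
    ∃ c : α → Fin 3, ∀ x, k x ≠ x → c (k x) ≠ c x :=
  ⟨color k, fun _ hne => color_step hne⟩

end RKAux

namespace RKAux

theorem fixed_mem {α : Type*} (k : α → α) (D : Ultrafilter α) (h : Ultrafilter.map k D = D) :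
    {x | k x = x} ∈ D := by
  by_contra hF
  obtain ⟨c, hc⟩ := exists_three_coloring k
  have hone : ∃ i : Fin 3, c ⁻¹' {i} ∈ D := by
    by_contra hno
    push_neg at hno
    have hcompl : ∀ i : Fin 3, (c ⁻¹' {i})ᶜ ∈ D := fun i =>
      (Ultrafilter.compl_mem_iff_notMem).mpr (hno i)
    have hinter : (c ⁻¹' {0})ᶜ ∩ ((c ⁻¹' {1})ᶜ ∩ (c ⁻¹' {2})ᶜ) ∈ D :=
      Filter.inter_mem (hcompl 0) (Filter.inter_mem (hcompl 1) (hcompl 2))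
    obtain ⟨x, hx0, hx1, hx2⟩ := Ultrafilter.nonempty_of_mem hinter
    have : c x = 0 ∨ c x = 1 ∨ c x = 2 := by omega
    simp only [Set.mem_compl_iff, Set.mem_preimage, Set.mem_singleton_iff] at hx0 hx1 hx2
    tauto
  obtain ⟨i, hi⟩ := hone
  have h2 : k ⁻¹' (c ⁻¹' {i}) ∈ D := by
    have : c ⁻¹' {i} ∈ Ultrafilter.map k D := by rwa [h]
    exact Ultrafilter.mem_map.mp this
  have h3 : {x | k x = x}ᶜ ∈ D := (Ultrafilter.compl_mem_iff_notMem).mpr hF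
  obtain ⟨x, hxi, hxki, hxne⟩ :=
    Ultrafilter.nonempty_of_mem (Filter.inter_mem hi (Filter.inter_mem h2 h3))
  simp only [Set.mem_preimage, Set.mem_singleton_iff, Set.mem_compl_iff, Set.mem_setOf_eq]
    at hxi hxki hxne
  exact hc x hxne (hxki.trans hxi.symm)

end RKAux

/-- `E ≤_RK D`: `E` is a pushforward of `D`. -/
def RudinKeislerLE {I J : Type*} (E : Ultrafilter J) (D : Ultrafilter I) : Prop :=
  ∃ f : I → J, E = Ultrafilter.map f D

theorem rudinKeisler_antisymm_up_to_iso {I J : Type*} (D : Ultrafilter I) (E : Ultrafilter J)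
    (h1 : RudinKeislerLE D E) (h2 : RudinKeislerLE E D) :
    ∃ A ∈ D, ∃ B ∈ E, ∃ g : I → J, Set.BijOn g A B ∧
      ∀ Y : Set J, Y ⊆ B → (Y ∈ E ↔ g ⁻¹' Y ∈ D) := by
  obtain ⟨f, hf⟩ := h1
  obtain ⟨g, hg⟩ := h2
  have hfg : Ultrafilter.map (f ∘ g) D = D := by
    rw [← Ultrafilter.map_map, ← hg, ← hf]
  have hA : {x | f (g x) = x} ∈ D := RKAux.fixed_mem (f ∘ g) D hfg
  refine ⟨{x | f (g x) = x}, hA, g '' {x | f (g x) = x}, ?_, g, ⟨?_, ?_, ?_⟩, ?_⟩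
  · rw [hg, Ultrafilter.mem_map]
    exact Filter.mem_of_superset hA (Set.subset_preimage_image g _)
  · exact Set.mapsTo_image g _
  · intro x hx y hy hxy
    have : f (g x) = f (g y) := by rw [hxy]
    rwa [hx, hy] at this
  · exact Set.surjOn_image g _
  · intro Y _
    rw [hg, Ultrafilter.mem_map]
end

section
/- Let (X_k)_{k ∈ K} be a family of topological spaces and let X be their Fréchet disjoint union: the disjoint union ⨿_k X_k together with one extra point ∞, where each X_k is open with its own topology and the neighborhoods of ∞ are the sets containing ∞ and containing all but finitely many of the X_k entirely. Then for every ultrafilter F (on any index set I), X is F-compact if and only if every X_k is F-compact. -/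
/-- A topological space `X` is `D`-compact if every `I`-indexed family in `X` has a
`D`-limit point. -/
def UltrafilterCompact {I : Type*} (X : Type*) [TopologicalSpace X] (D : Ultrafilter I) : Prop :=
  ∀ x : I → X, ∃ p : X, ∀ U ∈ nhds p, {i : I | x i ∈ U} ∈ D

/-- The Fréchet disjoint union of the family `X k`: the disjoint union together with an
extra point `none = ∞`, where each summand is open with its own topology, and a set
containing `∞` is open iff it contains all but finitely many summands entirely. -/
def frechetTopology {K : Type*} (X : K → Type*) [∀ k, TopologicalSpace (X k)] :
    TopologicalSpace (Option (Σ k, X k)) where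
  IsOpen U := (∀ k, IsOpen {x : X k | (some ⟨k, x⟩ : Option (Σ k, X k)) ∈ U}) ∧
    (none ∈ U → {k | ¬ ∀ x : X k, (some ⟨k, x⟩ : Option (Σ k, X k)) ∈ U}.Finite)
  isOpen_univ := ⟨fun _ => isOpen_univ, fun _ => by simp⟩
  isOpen_inter := by
    rintro U V ⟨hU1, hU2⟩ ⟨hV1, hV2⟩
    refine ⟨fun k => (hU1 k).inter (hV1 k), fun h => ((hU2 h.1).union (hV2 h.2)).subset ?_⟩
    intro k hk
    by_contra hc
    simp only [Set.mem_union, Set.mem_setOf_eq, not_or, not_not] at hc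
    exact hk fun x => ⟨hc.1 x, hc.2 x⟩
  isOpen_sUnion := by
    intro S hS
    constructor
    · intro k
      have : {x : X k | (some ⟨k, x⟩ : Option (Σ k, X k)) ∈ ⋃₀ S} =
          ⋃ U ∈ S, {x : X k | (some ⟨k, x⟩ : Option (Σ k, X k)) ∈ U} := by
        ext x; simp
      rw [this]
      exact isOpen_biUnion fun U hU => (hS U hU).1 k
    · rintro ⟨U, hUS, hU⟩
      refine ((hS U hUS).2 hU).subset ?_
      intro k hk
      exact fun hall => hk fun x => ⟨U, hUS, hall x⟩

theorem frechetUnion_ultrafilterCompact_iff {K : Type*} (X : K → Type*)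
    [∀ k, TopologicalSpace (X k)] {I : Type*} (F : Ultrafilter I) :
    @UltrafilterCompact I (Option (Σ k, X k)) (frechetTopology X) F ↔
      ∀ k, UltrafilterCompact (X k) F := by
  classical
  letI := frechetTopology X
  -- image of an open set of a summand is open
  have openIm : ∀ (k : K) (V : Set (X k)), IsOpen V →
      IsOpen {z : Option (Σ k, X k) | ∃ v ∈ V, z = some ⟨k, v⟩} := by
    intro k V hV
    constructor
    · intro k'
      by_cases hkk : k' = k
      · subst hkk
        have : {x : X k' | (some ⟨k', x⟩ : Option (Σ k, X k)) ∈
            {z | ∃ v ∈ V, z = some ⟨k', v⟩}} = V := by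
          ext x
          simp only [Set.mem_setOf_eq, Option.some.injEq]
          constructor
          · rintro ⟨v, hv, h⟩
            obtain ⟨-, h2⟩ := Sigma.mk.inj_iff.mp h
            rwa [eq_of_heq h2]
          · exact fun hx => ⟨x, hx, rfl⟩
        rw [this]; exact hV
      · have : {x : X k' | (some ⟨k', x⟩ : Option (Σ k, X k)) ∈
            {z | ∃ v ∈ V, z = some ⟨k, v⟩}} = ∅ := by
          ext x
          simp only [Set.mem_setOf_eq, Option.some.injEq, Set.mem_empty_iff_false, iff_false]
          rintro ⟨v, hv, h⟩
          exact hkk (Sigma.mk.inj_iff.mp h).1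
        rw [this]; exact isOpen_empty
    · rintro ⟨v, hv, h⟩; simp at h
  constructor
  · intro h k x
    obtain ⟨p, hp⟩ := h (fun i => some ⟨k, x i⟩)
    match p with
    | none =>
      exfalso
      set U : Set (Option (Σ k, X k)) := (Set.range (fun v : X k => some ⟨k, v⟩))ᶜ with hUdef
      have hUopen : IsOpen U := by
        constructor
        · intro k'
          by_cases hkk : k' = k
          · subst hkk
            have : {x : X k' | (some ⟨k', x⟩ : Option (Σ k, X k)) ∈ U} = ∅ := by
              ext v
              simp [hUdef]
            rw [this]; exact isOpen_empty
          · have : {x : X k' | (some ⟨k', x⟩ : Option (Σ k, X k)) ∈ U} = Set.univ := by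
              ext v
              simp only [hUdef, Set.mem_setOf_eq, Set.mem_compl_iff, Set.mem_range,
                Option.some.injEq, Set.mem_univ, iff_true]
              rintro ⟨w, hw⟩
              exact hkk (Sigma.mk.inj_iff.mp hw.symm).1
            rw [this]; exact isOpen_univ
        · intro _
          apply Set.Finite.subset (Set.finite_singleton k)
          intro k' hk'
          simp only [Set.mem_setOf_eq, not_forall] at hk'
          obtain ⟨v, hv⟩ := hk'
          simp only [hUdef, Set.mem_compl_iff, Set.mem_range, not_not] at hv
          obtain ⟨w, hw⟩ := hv
          exact (Sigma.mk.inj_iff.mp (Option.some.inj hw)).1.symm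
      have hnU : none ∈ U := by simp [hUdef]
      have := hp U (hUopen.mem_nhds hnU)
      have hemp : {i | (some ⟨k, x i⟩ : Option (Σ k, X k)) ∈ U} = ∅ := by
        ext i; simp [hUdef]
      rw [hemp] at this
      exact F.empty_notMem this
    | some ⟨k', q⟩ =>
      by_cases hkk : k' = k
      · subst hkk
        refine ⟨q, fun V hV => ?_⟩
        obtain ⟨W, hWV, hW, hqW⟩ := mem_nhds_iff.mp hV
        have hS := openIm k' W hW
        have := hp _ (hS.mem_nhds ⟨q, hqW, rfl⟩)
        refine F.mem_of_superset this ?_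
        rintro i ⟨v, hv, hvi⟩
        have h1 := Option.some.inj hvi.symm
        obtain ⟨-, h2⟩ := Sigma.mk.inj_iff.mp h1
        have hx : x i = v := eq_of_heq h2.symm
        simp only [Set.mem_setOf_eq, hx]
        exact hWV hv
      · exfalso
        have hS := openIm k' Set.univ isOpen_univ
        have := hp _ (hS.mem_nhds ⟨q, trivial, rfl⟩)
        have hemp : {i | (some ⟨k, x i⟩ : Option (Σ k, X k)) ∈
            {z | ∃ v ∈ (Set.univ : Set (X k')), z = some ⟨k', v⟩}} = ∅ := by
          ext i
          simp only [Set.mem_setOf_eq, Set.mem_empty_iff_false, iff_false]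
          rintro ⟨v, -, hv⟩
          exact hkk (Sigma.mk.inj_iff.mp (Option.some.inj hv)).1.symm
        rw [hemp] at this
        exact F.empty_notMem this
  · intro h x
    by_cases hn : {i | x i = none} ∈ F
    · refine ⟨none, fun U hU => ?_⟩
      refine F.mem_of_superset hn ?_
      intro i hi
      simp only [Set.mem_setOf_eq] at hi ⊢
      rw [hi]
      exact mem_of_mem_nhds hU
    · have hs : {i | x i ≠ none} ∈ F := (F.compl_mem_iff_notMem).mpr hn
      obtain ⟨i₀, hi₀⟩ := F.nonempty_of_mem hs
      obtain ⟨s₀, hs₀⟩ := Option.ne_none_iff_exists'.mp hi₀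
      set y : I → Σ k, X k := fun i => (x i).getD s₀ with hy
      have hxy : ∀ i, x i ≠ none → x i = some (y i) := by
        intro i hi
        obtain ⟨s, hsi⟩ := Option.ne_none_iff_exists'.mp hi
        simp [hy, hsi]
      by_cases hc : ∃ k, {i | (y i).1 = k} ∈ F
      · obtain ⟨k, hk⟩ := hc
        have hB : {i | ∃ v : X k, x i = some ⟨k, v⟩} ∈ F := by
          refine F.mem_of_superset (F.inter_mem hs hk) ?_
          rintro i ⟨hi1, hi2⟩
          simp only [Set.mem_setOf_eq] at hi1 hi2 ⊢
          rcases hyi : y i with ⟨k', v⟩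
          rw [hyi] at hi2
          dsimp at hi2
          subst hi2
          exact ⟨v, by rw [hxy i hi1, hyi]⟩
        obtain ⟨j, hj⟩ := F.nonempty_of_mem hB
        set z : I → X k := fun i =>
          if hvi : ∃ v : X k, x i = some ⟨k, v⟩ then hvi.choose else hj.choose with hz
        have hxz : ∀ i, (∃ v : X k, x i = some ⟨k, v⟩) → x i = some ⟨k, z i⟩ := by
          intro i hvi
          simp only [hz, dif_pos hvi]
          exact hvi.choose_spec
        obtain ⟨q, hq⟩ := h k z
        refine ⟨some ⟨k, q⟩, fun U hU => ?_⟩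
        obtain ⟨W, hWU, hW, hqW⟩ := mem_nhds_iff.mp hU
        have hV : IsOpen {v : X k | (some ⟨k, v⟩ : Option (Σ k, X k)) ∈ W} := hW.1 k
        have := hq _ (hV.mem_nhds hqW)
        refine F.mem_of_superset (F.inter_mem hB this) ?_
        rintro i ⟨hi1, hi2⟩
        simp only [Set.mem_setOf_eq] at hi1 hi2 ⊢
        rw [hxz i hi1]
        exact hWU hi2
      · push_neg at hc
        refine ⟨none, fun U hU => ?_⟩
        obtain ⟨W, hWU, hW, hnW⟩ := mem_nhds_iff.mp hU
        have hfin : {k | ¬ ∀ v : X k, (some ⟨k, v⟩ : Option (Σ k, X k)) ∈ W}.Finite :=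
          hW.2 hnW
        set S := {k | ¬ ∀ v : X k, (some ⟨k, v⟩ : Option (Σ k, X k)) ∈ W} with hSdef
        have hSmem : {i | (y i).1 ∈ S} ∉ F := by
          intro hmem
          have : {i | (y i).1 ∈ S} = ⋃ k ∈ S, {i | (y i).1 = k} := by
            ext i; simp
          rw [this] at hmem
          obtain ⟨k, -, hkF⟩ := (Ultrafilter.finite_biUnion_mem_iff hfin).mp hmem
          exact hc k hkF
        have hScompl : {i | (y i).1 ∉ S} ∈ F := by
          rw [← Ultrafilter.compl_mem_iff_notMem] at hSmem
          exact hSmem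
        refine F.mem_of_superset (F.inter_mem hs hScompl) ?_
        rintro i ⟨hi1, hi2⟩
        simp only [Set.mem_setOf_eq] at hi1 hi2 ⊢
        simp only [hSdef, Set.mem_setOf_eq, not_not] at hi2
        have : x i = some ⟨(y i).1, (y i).2⟩ := by rw [hxy i hi1]
        rw [this]
        exact hWU (hi2 (y i).2)
end

section
/- Let (E_k)_{k ∈ K} and (D_h)_{h ∈ H} be families of ultrafilters. Suppose that every topological space that is D_h-compact for all h ∈ H is E_k-compact for some k ∈ K. Then there exists a single k ∈ K such that every topological space that is D_h-compact for all h ∈ H is E_k-compact. -/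
universe u

namespace FrechetAux

variable {K : Type u} (X : K → Type u) [∀ k, TopologicalSpace (X k)]

/-- Fréchet disjoint union: disjoint union plus a point at infinity. -/
def FU : Type u := Option (Σ k, X k)

def ι (k : K) (x : X k) : FU X := some ⟨k, x⟩

def infty : FU X := none

instance : TopologicalSpace (FU X) where
  IsOpen U := (∀ k, IsOpen {x : X k | ι X k x ∈ U}) ∧
    (infty X ∈ U → ({k | ∀ x : X k, ι X k x ∈ U}ᶜ).Finite)
  isOpen_univ := ⟨fun k => by simpa using isOpen_univ, fun _ => by simp⟩
  isOpen_inter := by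
    rintro U V ⟨hU1, hU2⟩ ⟨hV1, hV2⟩
    refine ⟨fun k => (hU1 k).inter (hV1 k), fun h => ?_⟩
    refine ((hU2 h.1).union (hV2 h.2)).subset ?_
    intro k hk
    by_contra hcon
    simp only [Set.mem_union, Set.mem_compl_iff, not_or, not_not] at hcon
    exact hk fun x => ⟨hcon.1 x, hcon.2 x⟩
  isOpen_sUnion := by
    intro S hS
    constructor
    · intro k
      have : {x : X k | ι X k x ∈ ⋃₀ S} = ⋃ U ∈ S, {x : X k | ι X k x ∈ U} := by
        ext x; simp [Set.mem_sUnion]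
      rw [this]
      exact isOpen_biUnion fun U hU => (hS U hU).1 k
    · rintro ⟨U, hUS, hU⟩
      refine ((hS U hUS).2 hU).subset ?_
      intro k hk
      by_contra hcon
      simp only [Set.mem_compl_iff, not_not] at hcon
      exact hk fun x => Set.notMem_compl_iff.mp fun h => h ⟨U, hUS, hcon x⟩

lemma isOpen_def {U : Set (FU X)} : IsOpen U ↔ (∀ k, IsOpen {x : X k | ι X k x ∈ U}) ∧
    (infty X ∈ U → ({k | ∀ x : X k, ι X k x ∈ U}ᶜ).Finite) := Iff.rfl

lemma ι_inj (k : K) : Function.Injective (ι X k) := fun a b h => by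
  have h' : (some ⟨k, a⟩ : Option (Σ k, X k)) = some ⟨k, b⟩ := h
  simpa using h'

lemma mem_nhds_ι {k : K} {p : X k} {U : Set (FU X)} (hU : U ∈ nhds (ι X k p)) :
    {x : X k | ι X k x ∈ U} ∈ nhds p := by
  obtain ⟨V, hVU, hVopen, hpV⟩ := mem_nhds_iff.mp hU
  exact mem_nhds_iff.mpr ⟨{x | ι X k x ∈ V}, fun x hx => hVU hx,
    ((isOpen_def X).mp hVopen).1 k, hpV⟩

/-- The Fréchet union is `D`-compact if all summands are. -/
lemma fu_compact {I : Type u} (Dh : Ultrafilter I)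
    (h : ∀ k, UltrafilterCompact (X k) Dh) : UltrafilterCompact (FU X) Dh := by
  classical
  intro y
  by_cases hc : ∃ k, {i | ∃ x : X k, y i = ι X k x} ∈ Dh
  · obtain ⟨k, hk⟩ := hc
    obtain ⟨i0, x0, _⟩ : ∃ i, ∃ x, y i = ι X k x := Dh.nonempty_of_mem hk
    set x' : I → X k := fun i => if h : ∃ x, y i = ι X k x then h.choose else x0 with hx'
    obtain ⟨p, hp⟩ := h k x'
    refine ⟨ι X k p, fun U hU => ?_⟩
    have h1 := hp _ (mem_nhds_ι X hU)
    filter_upwards [h1, hk] with i hi1 hi2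
    have hyi : y i = ι X k (x' i) := by
      simp only [hx', dif_pos hi2]
      exact hi2.choose_spec
    simpa [hyi] using hi1
  · push_neg at hc
    refine ⟨infty X, fun U hU => ?_⟩
    obtain ⟨V, hVU, hVopen, hV⟩ := mem_nhds_iff.mp hU
    have hfin := ((isOpen_def X).mp hVopen).2 hV
    have hmem : (⋂ k ∈ {k | ∀ x : X k, ι X k x ∈ V}ᶜ, {i | ∃ x : X k, y i = ι X k x}ᶜ) ∈ Dh :=
      (Filter.biInter_mem hfin).mpr fun k _ =>
        Ultrafilter.compl_mem_iff_notMem.mpr (hc k)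
    refine Filter.mem_of_superset hmem ?_
    intro i hi
    simp only [Set.mem_iInter, Set.mem_compl_iff, Set.mem_setOf_eq] at hi
    show y i ∈ U
    rcases hyi : y i with _ | ⟨k, x⟩
    · exact hVU hV
    · by_cases hkV : ∀ x : X k, ι X k x ∈ V
      · exact hVU (hkV x)
      · exact absurd ⟨x, hyi⟩ (hi k hkV)

/-- If a family lives in one summand and has a limit in the Fréchet union,
it has a limit in the summand. -/
lemma limit_in_summand {J : Type u} {E : Ultrafilter J} (k : K) (x : J → X k) (p : FU X)
    (hp : ∀ U ∈ nhds p, {i | ι X k (x i) ∈ U} ∈ E) :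
    ∃ q : X k, ∀ U ∈ nhds q, {i | x i ∈ U} ∈ E := by
  classical
  set W : Set (FU X) := {z | ∀ x' : X k, z ≠ ι X k x'} with hW
  have hWopen : IsOpen W := by
    rw [isOpen_def]
    constructor
    · intro k'
      by_cases hkk : k' = k
      · subst hkk
        have : {x' : X k' | ι X k' x' ∈ W} = ∅ := by
          ext a; simp only [Set.mem_setOf_eq, Set.mem_empty_iff_false, iff_false, hW]
          intro h; exact h a rfl
        rw [this]; exact isOpen_empty
      · have : {x' : X k' | ι X k' x' ∈ W} = Set.univ := by
          ext a; simp only [Set.mem_setOf_eq, Set.mem_univ, iff_true, hW]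
          intro b hab
          exact hkk (congrArg Sigma.fst (Option.some_injective _ hab))
        rw [this]; exact isOpen_univ
    · intro _
      refine Set.Finite.subset (Set.finite_singleton k) ?_
      intro k' hk'
      simp only [Set.mem_compl_iff, Set.mem_setOf_eq, not_forall] at hk'
      obtain ⟨a, ha⟩ := hk'
      simp only [hW, Set.mem_setOf_eq, not_forall, not_not] at ha
      obtain ⟨b, hab⟩ := ha
      exact congrArg Sigma.fst (Option.some_injective _ hab)
  by_cases hpW : p ∈ W
  · exfalso
    have := hp W (hWopen.mem_nhds hpW)
    have hempty : {i | ι X k (x i) ∈ W} = ∅ := by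
      ext i
      simp only [Set.mem_setOf_eq, Set.mem_empty_iff_false, iff_false, hW]
      intro h; exact h (x i) rfl
    rw [hempty] at this
    exact Filter.empty_notMem (E : Filter J) this
  · simp only [hW, Set.mem_setOf_eq, not_forall, not_not] at hpW
    obtain ⟨q, hq⟩ := hpW
    refine ⟨q, fun U hU => ?_⟩
    obtain ⟨V, hVU, hVopen, hqV⟩ := mem_nhds_iff.mp hU
    set U' : Set (FU X) := ι X k '' V with hU'
    have hU'open : IsOpen U' := by
      rw [isOpen_def]
      constructor
      · intro k'
        by_cases hkk : k' = k
        · subst hkk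
          have : {x' : X k' | ι X k' x' ∈ U'} = V := by
            ext a
            simp only [Set.mem_setOf_eq, hU', Set.mem_image]
            constructor
            · rintro ⟨b, hbV, hab⟩
              rwa [ι_inj X k' hab] at hbV
            · intro haV; exact ⟨a, haV, rfl⟩
          rw [this]; exact hVopen
        · have : {x' : X k' | ι X k' x' ∈ U'} = ∅ := by
            ext a
            simp only [Set.mem_setOf_eq, Set.mem_empty_iff_false, iff_false, hU', Set.mem_image]
            rintro ⟨b, _, hab⟩
            exact hkk (congrArg Sigma.fst (Option.some_injective _ hab)).symm
          rw [this]; exact isOpen_empty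
      · intro hinf
        exfalso
        obtain ⟨b, _, hb⟩ := hinf
        exact Option.some_ne_none _ hb
    have hpU' : p ∈ U' := hq ▸ ⟨q, hqV, rfl⟩
    have := hp U' (hU'open.mem_nhds hpU')
    refine Filter.mem_of_superset this ?_
    intro i hi
    obtain ⟨b, hbV, hb⟩ := hi
    have : b = x i := ι_inj X k hb
    exact hVU (this ▸ hbV)

end FrechetAux

open FrechetAux

theorem exists_single_comfort_witness {K H : Type u} {J : K → Type u} {IFam : H → Type u}
    (E : ∀ k, Ultrafilter (J k)) (D : ∀ h, Ultrafilter (IFam h))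
    (hyp : ∀ (X : Type u) (_ : TopologicalSpace X),
      (∀ h, UltrafilterCompact X (D h)) → ∃ k, UltrafilterCompact X (E k)) :
    ∃ k, ∀ (X : Type u) (_ : TopologicalSpace X),
      (∀ h, UltrafilterCompact X (D h)) → UltrafilterCompact X (E k) := by
  by_contra hcon
  push_neg at hcon
  choose Xc tXc hDc hEc using hcon
  letI : ∀ k, TopologicalSpace (Xc k) := tXc
  obtain ⟨k, hk⟩ := hyp (FU Xc) inferInstance (fun h => fu_compact Xc (D h) (fun k => hDc k h))
  have hE := hEc k
  rw [UltrafilterCompact] at hE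
  push_neg at hE
  obtain ⟨x, hx⟩ := hE
  obtain ⟨p, hp⟩ := hk (fun i => ι Xc k (x i))
  obtain ⟨q, hq⟩ := limit_in_summand Xc k x p hp
  obtain ⟨U, hU, hUE⟩ := hx q
  exact hUE (hq U hU)
end

section
/- Let D be an ultrafilter on I, E an ultrafilter on J with E = Ultrafilter.map f D, and let K be a class of L-structures (closed under isomorphism) that is D-closed, i.e., closed under elementary substructures and under ultraproducts by D of families of members of K. Then for any M ∈ K, the ultrapower ∏_E M is isomorphic to an elementary substructure of ∏_D M, hence belongs to K. -/
open FirstOrder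

open FirstOrder.Language FirstOrder.Language.Structure Filter

universe u

/-- Any elementary embedding realizes its domain as an elementary substructure of its codomain. -/
theorem exists_elemSub_of_elemEmbedding {L : Language} {A B : Type*} [L.Structure A]
    [L.Structure B] (h : A ↪ₑ[L] B) :
    ∃ S : L.ElementarySubstructure B, Nonempty (A ≃[L] S) := by
  refine ⟨⟨h.toEmbedding.toHom.range, fun n φ x => ?_⟩, ⟨h.toEmbedding.equivRange⟩⟩
  set e := h.toEmbedding.equivRange with he
  have hx : ((↑) : _ → B) ∘ x = ⇑h ∘ (⇑e.symm ∘ x) := by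
    funext i
    simp only [Function.comp_apply, he]
    conv_lhs => rw [← (h.toEmbedding.equivRange).apply_symm_apply (x i)]
    exact Embedding.equivRange_apply _ _
  rw [hx, h.map_formula]
  have hx2 : x = ⇑e ∘ (⇑e.symm ∘ x) :=
    funext fun i => (e.apply_symm_apply (x i)).symm
  conv_rhs => rw [hx2]
  exact (StrongHomClass.realize_formula e φ).symm

/-- A nullary relation holds in a constant ultraproduct iff it holds in the factor. -/
theorem nullary_relMap_product {L : Language} {α : Type*} (u : Ultrafilter α) {Mc : Type*}
    [L.Structure Mc] (r : L.Relations 0) (x : Fin 0 → (u : Filter α).Product fun _ => Mc) :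
    RelMap r x ↔ RelMap r (Fin.elim0 : Fin 0 → Mc) := by
  letI := (u : Filter α).productSetoid fun _ => Mc
  have hx : x = fun i => (⟦Fin.elim0 i⟧ : (u : Filter α).Product fun _ => Mc) :=
    funext fun i => isEmptyElim i
  rw [hx]; erw [relMap_quotient_mk']
  show (∀ᶠ a in (u : Filter α), RelMap r fun i : Fin 0 => (Fin.elim0 i : α → Mc) a) ↔ _
  have h0 : ∀ a : α, (RelMap r fun i : Fin 0 => (Fin.elim0 i : α → Mc) a) =
      RelMap (M := Mc) r (Fin.elim0 : Fin 0 → Mc) := fun a => by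
    congr 1
    exact funext fun i => isEmptyElim i
  simp only [h0]
  exact eventually_const

theorem dClosed_class_closed_under_quotient_ultrapower {L : Language} {I J : Type u}
    (D : Ultrafilter I) (E : Ultrafilter J) (f : I → J) (hE : E = Ultrafilter.map f D)
    (K : (N : Type u) → [L.Structure N] → Prop)
    (hiso : ∀ (N N' : Type u) [L.Structure N] [L.Structure N'], K N → (N ≃[L] N') → K N')
    (helem : ∀ (N : Type u) [L.Structure N], K N → ∀ S : L.ElementarySubstructure N, K S)
    (hultra : ∀ (Mfam : I → Type u) [∀ i, L.Structure (Mfam i)],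
      (∀ i, K (Mfam i)) → K ((D : Filter I).Product Mfam))
    (M : Type u) [L.Structure M] (hM : K M) :
    (∃ S : L.ElementarySubstructure ((D : Filter I).Product fun _ => M),
      Nonempty (((E : Filter J).Product fun _ => M) ≃[L] S)) ∧
      K ((E : Filter J).Product fun _ => M) := by
  have hDE : ∀ p : J → Prop, (∀ᶠ j in (E : Filter J), p j) ↔ ∀ᶠ i in (D : Filter I), p (f i) := by
    intro p
    rw [hE, Ultrafilter.coe_map]
    exact eventually_map
  have key : ∃ S : L.ElementarySubstructure ((D : Filter I).Product fun _ => M),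
      Nonempty (((E : Filter J).Product fun _ => M) ≃[L] S) := by
    by_cases hne : Nonempty M
    · haveI := hne
      haveI : ∀ j : J, Nonempty ((fun _ => M) j) := fun _ => hne
      haveI : ∀ i : I, Nonempty ((fun _ => M) i) := fun _ => hne
      have wd : ∀ g g' : J → M, ((E : Filter J).productSetoid fun _ => M).r g g' →
          ((D : Filter I).productSetoid fun _ => M).r (g ∘ f) (g' ∘ f) := by
        intro g g' hgg'
        exact (hDE fun j => g j = g' j).mp hgg'
      let h : ((E : Filter J).Product fun _ => M) ↪ₑ[L] ((D : Filter I).Product fun _ => M) :=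
        { toFun := Quotient.map' (fun (g : J → M) => g ∘ f) wd
          map_formula' := by
            intro n φ x
            have hx : x = fun i => ((Quotient.out (x i) : J → M) :
                (E : Filter J).Product fun _ => M) :=
              funext fun i => (Quotient.out_eq' (x i)).symm
            rw [hx]
            have hcomp : (Quotient.map' (fun (g : J → M) => g ∘ f) wd) ∘
                (fun i => ((Quotient.out (x i) : J → M) : (E : Filter J).Product fun _ => M)) =
                fun i => (((Quotient.out (x i) ∘ f : I → M)) : (D : Filter I).Product fun _ => M) := rfl
            erw [hcomp]
            erw [Ultraproduct.realize_formula_cast (u := D) φ fun i => Quotient.out (x i) ∘ f,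
              Ultraproduct.realize_formula_cast (u := E) φ fun i => Quotient.out (x i)]
            exact (hDE fun j => φ.Realize fun k => Quotient.out (x k) j).symm }
      exact exists_elemSub_of_elemEmbedding h
    · rw [not_nonempty_iff] at hne
      haveI := hne
      haveI hJ : Nonempty J := nonempty_of_neBot (E : Filter J)
      haveI hI : Nonempty I := nonempty_of_neBot (D : Filter I)
      haveI hA : IsEmpty ((E : Filter J).Product fun _ => M) :=
        ⟨fun a => Quotient.inductionOn' a fun g => isEmptyElim (g hJ.some)⟩
      haveI hB : IsEmpty ((D : Filter I).Product fun _ => M) :=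
        ⟨fun a => Quotient.inductionOn' a fun g => isEmptyElim (g hI.some)⟩
      haveI hT : IsEmpty
          ((⊤ : L.ElementarySubstructure ((D : Filter I).Product fun _ => M)) :
            Type u) :=
        ⟨fun s => isEmptyElim (s : (D : Filter I).Product fun _ => M)⟩
      refine ⟨⊤, ⟨{ toEquiv := Equiv.equivOfIsEmpty _ _
                    map_fun' := fun {n} F x => isEmptyElim (funMap F x)
                    map_rel' := ?_ }⟩⟩
      intro n r x
      match n with
      | n + 1 => exact isEmptyElim (x 0)
      | 0 =>
        exact (nullary_relMap_product D r _).trans (nullary_relMap_product E r x).symm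
  obtain ⟨S, ⟨e⟩⟩ := key
  refine ⟨⟨S, ⟨e⟩⟩, ?_⟩
  exact hiso S _ (helem _ (hultra _ fun _ => hM) S) e.symm
end

section
/- If λ is an infinite cardinal and the ultrafilter D on I is (cf λ, cf λ)-regular or (λ⁺, λ⁺)-regular, then D is (λ, λ)-regular. -/
universe u

open Cardinal Set

/-- `D` is `(λ,λ)`-regular: there is a `λ`-indexed family of members of `D` such that every
point lies in fewer than `λ` of its sets. -/
def UFRegular {I : Type u} (lam : Cardinal.{u}) (D : Ultrafilter I) : Prop :=
  ∃ A : lam.out → Set I, (∀ α, A α ∈ D) ∧ ∀ i : I, Cardinal.mk {α | i ∈ A α} < lam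

section Helpers

variable {I : Type u} {lam : Cardinal.{u}} {D : Ultrafilter I}

/-- Transfer a witnessing family along an arbitrary index type of the right cardinality. -/
private lemma ufRegular_of_family {J : Type u} (hJ : Cardinal.mk J = lam) (B : J → Set I)
    (hBD : ∀ j, B j ∈ D) (hcnt : ∀ i : I, Cardinal.mk {j | i ∈ B j} < lam) :
    UFRegular lam D := by
  have h2 : Cardinal.mk lam.out = Cardinal.mk J := by rw [hJ, Cardinal.mk_out]
  obtain ⟨q⟩ := Cardinal.eq.mp h2
  refine ⟨fun a => B (q a), fun a => hBD _, fun i => ?_⟩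
  have e : {α : lam.out | i ∈ B (q α)} ≃ {j : J | i ∈ B j} :=
    q.subtypeEquiv fun a => Iff.rfl
  rw [Cardinal.mk_congr e]
  exact hcnt i

private lemma lt_cof_type_bounded {α : Type u} [LinearOrder α] [WellFoundedLT α] {S : Set α}
    (h : Cardinal.mk S < Ordinal.cof (Ordinal.type ((· < ·) : α → α → Prop))) :
    Set.Bounded (· < ·) S := by
  rw [Ordinal.cof_type] at h
  by_contra hb
  apply h.not_ge
  apply Order.cof_le
  intro x
  simp only [Set.Bounded, not_exists, not_forall, not_lt] at hb
  obtain ⟨b, hbS, hxb⟩ := hb x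
  exact ⟨b, hbS, hxb⟩

private lemma mk_Iic_lt {c : Cardinal.{u}} (hc : ℵ₀ ≤ c) (y : c.ord.ToType) :
    Cardinal.mk (Set.Iic y) < c := by
  have h1 : Cardinal.mk (Set.Iic y) ≤ Cardinal.mk (Set.Iio y) + 1 := by
    rw [← Set.Iio_insert]; exact Cardinal.mk_insert_le
  exact h1.trans_lt (Cardinal.add_lt_of_lt hc (Cardinal.mk_Iio_ord_toType y)
    (one_lt_aleph0.trans_le hc))

/-- A "quasi-uniform" function into the order `lam.ord.ToType` yields `(λ,λ)`-regularity. -/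
private lemma ufRegular_of_bounds (hlam : ℵ₀ ≤ lam) (v : I → lam.ord.ToType)
    (hv : ∀ x : lam.ord.ToType, {i | x ≤ v i} ∈ D) : UFRegular lam D := by
  refine ufRegular_of_family (Cardinal.mk_ord_toType lam) (fun x => {i | x ≤ v i}) hv fun i => ?_
  have hset : {x : lam.ord.ToType | i ∈ {i' | x ≤ v i'}} = Set.Iic (v i) := rfl
  calc Cardinal.mk {x : lam.ord.ToType | i ∈ {i' | x ≤ v i'}}
      = Cardinal.mk (Set.Iic (v i)) := by rw [hset]
    _ < lam := mk_Iic_lt hlam (v i)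

end Helpers
section Case1

variable {I : Type u} {lam : Cardinal.{u}} {D : Ultrafilter I}

private lemma ufRegular_of_cof (hlam : ℵ₀ ≤ lam) (hreg : UFRegular lam.ord.cof D) :
    UFRegular lam D := by
  rcases eq_or_lt_of_le (Ordinal.cof_ord_le lam) with heq | hlt
  · rw [← heq]; exact hreg
  obtain ⟨C, hCD, hCcnt⟩ := hreg
  haveI hwoL : IsWellOrder lam.ord.ToType (· < ·) := isWellOrder_lt
  haveI hwoK : IsWellOrder (lam.ord.cof).ord.ToType (· < ·) := isWellOrder_lt
  have hκinf : ℵ₀ ≤ lam.ord.cof :=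
    Ordinal.aleph0_le_cof.2 (Cardinal.isSuccLimit_ord hlam)
  have hκreg : (lam.ord.cof).ord.cof = lam.ord.cof := Ordinal.cof_cof lam.ord
  obtain ⟨S, hSub, hScard⟩ :=
    Order.exists_cof_eq (α := lam.ord.ToType)
  rw [Ordinal.cof_toType] at hScard
  have hKS : Cardinal.mk ((lam.ord.cof).ord.ToType) = Cardinal.mk S := by
    rw [Cardinal.mk_ord_toType, hScard]
  obtain ⟨u⟩ := Cardinal.eq.mp hKS
  -- least strict upper bounds of initial segments of `u`
  have hub : ∀ k : (lam.ord.cof).ord.ToType,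
      ∃ b : lam.ord.ToType, ∀ k' ≤ k, (u k' : lam.ord.ToType) < b := by
    intro k
    have hcard : Cardinal.mk ((fun k' => (u k' : lam.ord.ToType)) '' Set.Iic k) <
        Ordinal.cof (Ordinal.type ((· < ·) : lam.ord.ToType → lam.ord.ToType → Prop)) := by
      rw [Ordinal.type_toType]
      exact Cardinal.mk_image_le.trans_lt (mk_Iic_lt hκinf k)
    obtain ⟨b, hb⟩ := lt_cof_type_bounded hcard
    exact ⟨b, fun k' hk' => hb _ (Set.mem_image_of_mem _ hk')⟩
  have wf : WellFounded ((· < ·) : lam.ord.ToType → lam.ord.ToType → Prop) :=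
    IsWellFounded.wf
  set UB : (lam.ord.cof).ord.ToType → Set lam.ord.ToType :=
    fun k => {b | ∀ k' ≤ k, (u k' : lam.ord.ToType) < b} with hUB
  have hUBne : ∀ k, (UB k).Nonempty := fun k => (hub k).imp fun b hb => hb
  set g : (lam.ord.cof).ord.ToType → lam.ord.ToType :=
    fun k => wf.min (UB k) (hUBne k) with hg
  have hg_mem : ∀ k, g k ∈ UB k := fun k => wf.min_mem _ _
  have hg_mono : ∀ {k k'}, k ≤ k' → g k ≤ g k' := by
    intro k k' hkk'
    have hmem : g k' ∈ UB k := fun k'' hk'' => hg_mem k' k'' (hk''.trans hkk')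
    exact not_lt.1 (wf.not_lt_min (UB k) hmem)
  have hg_cof : ∀ x : lam.ord.ToType, ∃ k, x < g k := by
    intro x
    obtain ⟨s, hsS, hsx⟩ := hSub x
    refine ⟨u.symm ⟨s, hsS⟩, lt_of_le_of_lt hsx ?_⟩
    have := hg_mem (u.symm ⟨s, hsS⟩) (u.symm ⟨s, hsS⟩) le_rfl
    simpa using this
  choose lev hlev using hg_cof
  obtain ⟨rdx⟩ := Cardinal.eq.mp (show Cardinal.mk ((lam.ord.cof).ord.ToType) =
      Cardinal.mk ((lam.ord.cof).out) by rw [Cardinal.mk_ord_toType, Cardinal.mk_out])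
  refine ufRegular_of_family (Cardinal.mk_ord_toType lam)
    (fun x => C (rdx (lev x))) (fun x => hCD _) fun i => ?_
  set J0 : Set ((lam.ord.cof).out) := {η | i ∈ C η} with hJ0def
  have hJ0 : Cardinal.mk J0 < lam.ord.cof := hCcnt i
  set JK : Set ((lam.ord.cof).ord.ToType) := {k | rdx k ∈ J0} with hJKdef
  have hJK : Cardinal.mk JK < lam.ord.cof := by
    have e : {k | rdx k ∈ J0} ≃ {η : (lam.ord.cof).out | η ∈ J0} :=
      rdx.subtypeEquiv fun k => Iff.rfl
    rw [show JK = {k | rdx k ∈ J0} from rfl, Cardinal.mk_congr e]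
    exact hJ0
  have hbdd : Set.Bounded (· < ·) JK := by
    apply lt_cof_type_bounded
    rw [Ordinal.type_toType, hκreg]
    exact hJK
  obtain ⟨b₀, hb₀⟩ := hbdd
  have hsub : {x : lam.ord.ToType | i ∈ C (rdx (lev x))} ⊆ Set.Iio (g b₀) := by
    intro x hx
    have h2 : lev x < b₀ := hb₀ _ hx
    exact (hlev x).trans_le (hg_mono h2.le)
  exact lt_of_le_of_lt (Cardinal.mk_le_mk_of_subset hsub) (Cardinal.mk_Iio_ord_toType _)

end Case1
section Case2

variable {I : Type u} {lam : Cardinal.{u}} {D : Ultrafilter I}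

private lemma ufRegular_of_succ (hlam : ℵ₀ ≤ lam) (hreg : UFRegular (Order.succ lam) D) :
    UFRegular lam D := by
  classical
  obtain ⟨A, hAD, hAcnt⟩ := hreg
  haveI hwoO : IsWellOrder (Order.succ lam).ord.ToType (· < ·) := isWellOrder_lt
  haveI hwoL : IsWellOrder lam.ord.ToType (· < ·) := isWellOrder_lt
  have hμreg : (Order.succ lam).ord.cof = Order.succ lam :=
    (Cardinal.isRegular_succ hlam).cof_eq
  obtain ⟨ν⟩ := Cardinal.eq.mp (show Cardinal.mk ((Order.succ lam).ord.ToType) =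
      Cardinal.mk ((Order.succ lam).out) by rw [Cardinal.mk_ord_toType, Cardinal.mk_out])
  -- strict upper bounds for the covering sets
  have hbnd : ∀ i : I, ∃ b : (Order.succ lam).ord.ToType,
      ∀ x, i ∈ A (ν x) → x < b := by
    intro i
    have hScard : Cardinal.mk {x : (Order.succ lam).ord.ToType | i ∈ A (ν x)} <
        Ordinal.cof (Ordinal.type
          ((· < ·) : (Order.succ lam).ord.ToType → (Order.succ lam).ord.ToType → Prop)) := by
      rw [Ordinal.type_toType, hμreg]
      have e : {x : (Order.succ lam).ord.ToType | i ∈ A (ν x)} ≃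
          {α : (Order.succ lam).out | i ∈ A α} := ν.subtypeEquiv fun b => Iff.rfl
      rw [Cardinal.mk_congr e]
      exact hAcnt i
    obtain ⟨b, hb⟩ := lt_cof_type_bounded hScard
    exact ⟨b, fun x hx => hb x hx⟩
  choose t hts using hbnd
  -- injections of initial segments into `lam.ord.ToType`
  have hEinj : ∀ b : (Order.succ lam).ord.ToType,
      Nonempty ({x : (Order.succ lam).ord.ToType // x < b} ↪ lam.ord.ToType) := by
    intro b
    rw [← Cardinal.le_def, Cardinal.mk_ord_toType]
    have h1 : Cardinal.mk {x : (Order.succ lam).ord.ToType // x < b} < Order.succ lam := by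
      exact Cardinal.card_typein_toType_lt (Order.succ lam) b
    exact Order.lt_succ_iff.1 h1
  have E : ∀ b : (Order.succ lam).ord.ToType,
      ({x : (Order.succ lam).ord.ToType // x < b} ↪ lam.ord.ToType) :=
    fun b => (hEinj b).some
  have hLne : Nonempty (lam.ord.ToType) := by
    rw [Ordinal.toType_nonempty_iff_ne_zero, Ne, Cardinal.ord_eq_zero]
    exact (aleph0_pos.trans_le hlam).ne'
  haveI := hLne
  set v : (Order.succ lam).ord.ToType → I → lam.ord.ToType := fun γ i =>
    if h : γ < t i then E (t i) ⟨γ, h⟩ else Classical.arbitrary _ with hvdef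
  by_cases hU : ∃ γ : (Order.succ lam).ord.ToType,
      ∀ x : lam.ord.ToType, {i | x ≤ v γ i} ∈ D
  · obtain ⟨γ, hγ⟩ := hU
    exact ufRegular_of_bounds hlam (v γ) hγ
  push_neg at hU
  choose xa hxa using hU
  have hxa' : ∀ γ, {i | v γ i < xa γ} ∈ D := by
    intro γ
    have h1 : {i | xa γ ≤ v γ i}ᶜ ∈ D := Ultrafilter.compl_mem_iff_notMem.2 (hxa γ)
    convert h1 using 1
    ext i
    simp [not_le]
  -- pigeonhole: some fiber of `xa` is large
  have hpig : ∃ y : lam.ord.ToType,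
      lam < Cardinal.mk {γ : (Order.succ lam).ord.ToType // xa γ = y} := by
    by_contra hcon
    push_neg at hcon
    have h1 : Cardinal.mk ((Order.succ lam).ord.ToType) =
        Cardinal.sum fun y : lam.ord.ToType =>
          Cardinal.mk {γ : (Order.succ lam).ord.ToType // xa γ = y} := by
      rw [← Cardinal.mk_sigma]
      exact (Cardinal.mk_congr (Equiv.sigmaFiberEquiv xa)).symm
    have h2 : Cardinal.mk ((Order.succ lam).ord.ToType) ≤
        Cardinal.mk (lam.ord.ToType) * lam := by
      rw [h1, ← Cardinal.sum_const']
      exact Cardinal.sum_le_sum _ _ hcon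
    rw [Cardinal.mk_ord_toType, Cardinal.mk_ord_toType, Cardinal.mul_eq_self hlam] at h2
    exact (Order.lt_succ lam).not_ge h2
  obtain ⟨y, hy⟩ := hpig
  obtain ⟨w⟩ : Nonempty (lam.out ↪ {γ : (Order.succ lam).ord.ToType // xa γ = y}) := by
    rw [← Cardinal.le_def, Cardinal.mk_out]
    exact hy.le
  refine ufRegular_of_family (Cardinal.mk_out lam)
    (fun j => {i | ∃ h : ((w j : (Order.succ lam).ord.ToType)) < t i,
      E (t i) ⟨(w j : (Order.succ lam).ord.ToType), h⟩ < y}) ?_ fun i => ?_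
  · intro j
    have hmem1 : {i | i ∈ A (ν (w j : (Order.succ lam).ord.ToType))} ∈ D := hAD _
    have hmem2 : {i | v (w j : (Order.succ lam).ord.ToType) i <
        xa (w j : (Order.succ lam).ord.ToType)} ∈ D := hxa' _
    have hxay : xa (w j : (Order.succ lam).ord.ToType) = y := (w j).2
    filter_upwards [hmem1, hmem2] with i h1 h2
    have hlt : ((w j : (Order.succ lam).ord.ToType)) < t i := hts i _ h1
    refine ⟨hlt, ?_⟩
    have hveq : v (w j : (Order.succ lam).ord.ToType) i =
        E (t i) ⟨(w j : (Order.succ lam).ord.ToType), hlt⟩ := dif_pos hlt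
    rw [hxay, hveq] at h2
    exact h2
  · -- counts
    have hcnt : Cardinal.mk {j : lam.out |
        i ∈ {i' | ∃ h : ((w j : (Order.succ lam).ord.ToType)) < t i',
          E (t i') ⟨(w j : (Order.succ lam).ord.ToType), h⟩ < y}} ≤
        Cardinal.mk (Set.Iio y) := by
      refine Cardinal.mk_le_of_injective (f := fun jj =>
        (⟨E (t i) ⟨(w jj.1 : (Order.succ lam).ord.ToType), jj.2.choose⟩,
          jj.2.choose_spec⟩ : Set.Iio y)) ?_
      intro j1 j2 heq
      have h1 := Subtype.ext_iff.mp heq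
      have h2 := (E (t i)).injective h1
      have h3 := congrArg Subtype.val h2
      have h4 : w j1.1 = w j2.1 := Subtype.ext h3
      exact Subtype.ext (w.injective h4)
    exact hcnt.trans_lt (Cardinal.mk_Iio_ord_toType y)

end Case2

theorem regular_of_cof_or_succ_regular {I : Type u} (lam : Cardinal.{u})
    (hlam : Cardinal.aleph0 ≤ lam) (D : Ultrafilter I)
    (h : UFRegular lam.ord.cof D ∨ UFRegular (Order.succ lam) D) :
    UFRegular lam D := by
  rcases h with h | h
  · exact ufRegular_of_cof hlam h
  · exact ufRegular_of_succ hlam h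
end
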